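/- arXiv:1211.1703 — 2 statements merged into one kernel-verified Lean document; each statement's English description precedes it below -/
import Mathlib

section
/- Fix n ≥ 1, reals a_i > 0, d_i > 0, p_i ∈ (0,1) for i ∈ [n], and reals κ > 0, B and x_i > 0 satisfying B = κ·(1 + Σ_{i∈[n]} a_i/d_i) and x_i = κ·a_i/(p_i·d_i) for all i. Suppose u : 𝒫([n]) → ℝ is a maximizer of the LP2 objective over LP2-feasible functions, and u is monotone (S ⊆ T implies u(S) ≤ u(T)) and supermodular (u(S∪T) + u(S∩T) ≥ u(S) + u(T)). Define q_i(S) = 1 if i ∈ S and q_i(S) = (u(S∪{i}) − u(S))/d_i if i ∉ S. Then the pair (u, q) is feasible for LP1 (with parameters a, d, p) and maximizes the LP1 objective over all LP1-feasible pairs. Moreover, if u is the unique LP2 maximizer, then (u, q) is the unique LP1 maximizer. -/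
open Finset
open scoped BigOperators Classical

/-- The probability of the set `S` of items having high value. -/
def pmass (n : ℕ) (p : Fin n → ℝ) (S : Finset (Fin n)) : ℝ :=
  (∏ i ∈ S, p i) * ∏ i ∈ Sᶜ, (1 - p i)

/-- The valuation vector of type `S`: `a i + d i` for `i ∈ S` (high) and `a i` otherwise. -/
def vval (n : ℕ) (a d : Fin n → ℝ) (S : Finset (Fin n)) (i : Fin n) : ℝ :=
  if i ∈ S then a i + d i else a i

/-- Feasibility for LP1: (BIC), (IR) and (PROB). -/
def LP1Feasible (n : ℕ) (a d : Fin n → ℝ) (u : Finset (Fin n) → ℝ)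
    (q : Finset (Fin n) → Fin n → ℝ) : Prop :=
  (∀ S T : Finset (Fin n),
      u S ≥ u T + ∑ i, (vval n a d S i - vval n a d T i) * q T i) ∧
  (∀ S : Finset (Fin n), 0 ≤ u S) ∧
  (∀ S : Finset (Fin n), ∀ i, 0 ≤ q S i ∧ q S i ≤ 1)

/-- The LP1 objective (expected revenue). -/
def LP1Obj (n : ℕ) (a d p : Fin n → ℝ) (u : Finset (Fin n) → ℝ)
    (q : Finset (Fin n) → Fin n → ℝ) : ℝ :=
  ∑ S : Finset (Fin n), pmass n p S * ((∑ i, vval n a d S i * q S i) - u S)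

/-- Feasibility for LP2. -/
def LP2Feasible (n : ℕ) (d : Fin n → ℝ) (u : Finset (Fin n) → ℝ) : Prop :=
  (∀ S : Finset (Fin n), ∀ i ∉ S, u (insert i S) - u S ≤ d i) ∧
  (∀ S : Finset (Fin n), 0 ≤ u S)

/-- The LP2 objective. -/
def LP2Obj (n : ℕ) (p x : Fin n → ℝ) (B : ℝ) (u : Finset (Fin n) → ℝ) : ℝ :=
  ∑ S : Finset (Fin n), pmass n p S * ((∑ i ∈ S, x i) - B) * u S

/-- The allocation rule induced by an LP2 solution `u`. -/
noncomputable def qOf (n : ℕ) (d : Fin n → ℝ) (u : Finset (Fin n) → ℝ)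
    (S : Finset (Fin n)) (i : Fin n) : ℝ :=
  if i ∈ S then 1 else (u (insert i S) - u S) / d i

/-! ### Auxiliary lemmas -/

lemma pmass_pos {n : ℕ} {p : Fin n → ℝ} (hp : ∀ i, p i ∈ Set.Ioo (0:ℝ) 1)
    (S : Finset (Fin n)) : 0 < pmass n p S := by
  refine mul_pos (Finset.prod_pos fun i _ => (hp i).1)
    (Finset.prod_pos fun i _ => by have := (hp i).2; linarith)

lemma pmass_erase {n : ℕ} {p : Fin n → ℝ} (hp : ∀ i, p i ∈ Set.Ioo (0:ℝ) 1)
    {T : Finset (Fin n)} {i : Fin n} (hi : i ∈ T) :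
    pmass n p (T.erase i) = pmass n p T * (1 - p i) / p i := by
  have hpi : p i ≠ 0 := ne_of_gt (hp i).1
  rw [eq_div_iff hpi]
  unfold pmass
  have h1 : p i * ∏ j ∈ T.erase i, p j = ∏ j ∈ T, p j := Finset.mul_prod_erase T p hi
  have h2 : (T.erase i)ᶜ = insert i Tᶜ := by
    ext j
    simp only [Finset.mem_compl, Finset.mem_erase, Finset.mem_insert]
    tauto
  have h3 : ∏ j ∈ (T.erase i)ᶜ, (1 - p j) = (1 - p i) * ∏ j ∈ Tᶜ, (1 - p j) := by
    rw [h2, Finset.prod_insert (by simp [hi])]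
  rw [h3, ← h1]; ring

lemma sup_marg {n : ℕ} {u : Finset (Fin n) → ℝ}
    (hsuper : ∀ S T : Finset (Fin n), u S + u T ≤ u (S ∪ T) + u (S ∩ T))
    (A T : Finset (Fin n)) :
    ∑ i ∈ A \ T, (u (insert i T) - u T) ≤ u (A ∪ T) - u T := by
  induction A using Finset.induction_on with
  | empty => simp
  | @insert j A hjA ih =>
    by_cases hjT : j ∈ T
    · rw [Finset.insert_sdiff_of_mem _ hjT]
      have : insert j A ∪ T = A ∪ T := by
        ext k; simp only [Finset.mem_union, Finset.mem_insert]
        constructor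
        · rintro ((rfl | h) | h)
          exacts [Or.inr hjT, Or.inl h, Or.inr h]
        · rintro (h | h)
          exacts [Or.inl (Or.inr h), Or.inr h]
      rw [this]; exact ih
    · rw [Finset.insert_sdiff_of_notMem _ hjT,
        Finset.sum_insert (by simp [hjA])]
      have hXY : (A ∪ T) ∪ insert j T = insert j (A ∪ T) := by
        ext k; simp only [Finset.mem_union, Finset.mem_insert]; tauto
      have hXI : (A ∪ T) ∩ insert j T = T := by
        ext k; simp only [Finset.mem_inter, Finset.mem_union, Finset.mem_insert]
        constructor
        · rintro ⟨h1 | h1, h2 | h2⟩ <;> first | assumption | (subst h2; tauto)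
        · intro h; exact ⟨Or.inr h, Or.inr h⟩
      have := hsuper (A ∪ T) (insert j T)
      rw [hXY, hXI] at this
      have hins : insert j A ∪ T = insert j (A ∪ T) := by
        ext k; simp only [Finset.mem_union, Finset.mem_insert]; tauto
      rw [hins]
      linarith

lemma lip_sum {n : ℕ} {u : Finset (Fin n) → ℝ} {d : Fin n → ℝ}
    (hlip : ∀ S : Finset (Fin n), ∀ i ∉ S, u (insert i S) - u S ≤ d i)
    (A S : Finset (Fin n)) :
    u (S ∪ A) ≤ u S + ∑ i ∈ A \ S, d i := by
  induction A using Finset.induction_on with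
  | empty => simp
  | @insert j A hjA ih =>
    by_cases hjS : j ∈ S
    · have h1 : S ∪ insert j A = S ∪ A := by
        ext k; simp only [Finset.mem_union, Finset.mem_insert]
        constructor
        · rintro (h | rfl | h)
          exacts [Or.inl h, Or.inl hjS, Or.inr h]
        · rintro (h | h)
          exacts [Or.inl h, Or.inr (Or.inr h)]
      rw [h1, Finset.insert_sdiff_of_mem _ hjS]; exact ih
    · have h1 : S ∪ insert j A = insert j (S ∪ A) := by
        ext k; simp only [Finset.mem_union, Finset.mem_insert]; tauto
      have hjSA : j ∉ S ∪ A := by simp [hjS, hjA]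
      have h2 := hlip (S ∪ A) j hjSA
      rw [h1, Finset.insert_sdiff_of_notMem _ hjS,
        Finset.sum_insert (by simp [hjA])]
      linarith

lemma sum_vval_qOf {n : ℕ} {a d : Fin n → ℝ} {u : Finset (Fin n) → ℝ}
    (hd : ∀ i, 0 < d i) (S T : Finset (Fin n)) :
    ∑ i, (vval n a d S i - vval n a d T i) * qOf n d u T i
      = (∑ i ∈ S \ T, (u (insert i T) - u T)) - ∑ i ∈ T \ S, d i := by
  rw [← Finset.sum_add_sum_compl T]
  have h1 : ∑ i ∈ T, (vval n a d S i - vval n a d T i) * qOf n d u T i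
      = - ∑ i ∈ T \ S, d i := by
    rw [Finset.sdiff_eq_filter, Finset.sum_filter, ← Finset.sum_neg_distrib]
    refine Finset.sum_congr rfl fun i hi => ?_
    simp only [vval, qOf, if_pos hi]
    by_cases hiS : i ∈ S <;> simp [hiS]
  have h2 : ∑ i ∈ Tᶜ, (vval n a d S i - vval n a d T i) * qOf n d u T i
      = ∑ i ∈ S \ T, (u (insert i T) - u T) := by
    have hST : S \ T = Tᶜ.filter (· ∈ S) := by
      ext i; simp only [Finset.mem_sdiff, Finset.mem_filter, Finset.mem_compl]; tauto
    rw [hST, Finset.sum_filter]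
    refine Finset.sum_congr rfl fun i hi => ?_
    have hiT : i ∉ T := Finset.mem_compl.mp hi
    simp only [vval, qOf, if_neg hiT]
    by_cases hiS : i ∈ S
    · simp only [if_pos hiS]
      have hdi : d i ≠ 0 := ne_of_gt (hd i)
      field_simp
      ring
    · simp [hiS]
  rw [h1, h2]; ring

lemma reindex_lemma {n : ℕ} (f : Finset (Fin n) → Finset (Fin n) → Fin n → ℝ) :
    ∑ S : Finset (Fin n), ∑ i ∈ Sᶜ, f (insert i S) S i
      = ∑ T : Finset (Fin n), ∑ i ∈ T, f T (T.erase i) i := by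
  rw [Finset.sum_sigma', Finset.sum_sigma']
  refine Finset.sum_nbij' (fun z => ⟨insert z.2 z.1, z.2⟩) (fun z => ⟨z.1.erase z.2, z.2⟩)
    ?_ ?_ ?_ ?_ ?_
  · rintro ⟨S, i⟩ hz
    simp only [Finset.mem_sigma, Finset.mem_univ, true_and, Finset.mem_compl] at hz ⊢
    exact Finset.mem_insert_self i S
  · rintro ⟨T, i⟩ hz
    simp only [Finset.mem_sigma, Finset.mem_univ, true_and, Finset.mem_compl] at hz ⊢
    exact Finset.notMem_erase i T
  · rintro ⟨S, i⟩ hz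
    simp only [Finset.mem_sigma, Finset.mem_univ, true_and, Finset.mem_compl] at hz
    simp [Finset.erase_insert hz]
  · rintro ⟨T, i⟩ hz
    simp only [Finset.mem_sigma, Finset.mem_univ, true_and] at hz
    simp [Finset.insert_erase hz]
  · rintro ⟨S, i⟩ hz
    simp only [Finset.mem_sigma, Finset.mem_univ, true_and, Finset.mem_compl] at hz
    rw [Finset.erase_insert hz]

/-- The "pointwise optimal revenue" functional. -/
noncomputable def Fo (n : ℕ) (a d p : Fin n → ℝ) (w : Finset (Fin n) → ℝ) : ℝ :=
  ∑ S : Finset (Fin n), pmass n p S *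
    ((∑ i ∈ S, (a i + d i)) + (∑ i ∈ Sᶜ, (a i / d i) * (w (insert i S) - w S)) - w S)

lemma key_identity {n : ℕ} {a d p x : Fin n → ℝ} {κ B : ℝ}
    (hd : ∀ i, 0 < d i) (hp : ∀ i, p i ∈ Set.Ioo (0:ℝ) 1)
    (hBeq : B = κ * (1 + ∑ i, a i / d i))
    (hxeq : ∀ i, x i = κ * a i / (p i * d i))
    (w : Finset (Fin n) → ℝ) :
    κ * Fo n a d p w
      = κ * (∑ S : Finset (Fin n), pmass n p S * (∑ i ∈ S, (a i + d i))) + LP2Obj n p x B w := by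
  have coeff : ∀ T : Finset (Fin n),
      κ * ((∑ i ∈ T, pmass n p (T.erase i) * (a i / d i))
        - (pmass n p T * (∑ i ∈ Tᶜ, a i / d i) + pmass n p T))
      = pmass n p T * ((∑ i ∈ T, x i) - B) := by
    intro T
    have per_i : ∀ i ∈ T, κ * (pmass n p (T.erase i) * (a i / d i))
        = pmass n p T * x i - κ * (pmass n p T * (a i / d i)) := by
      intro i hi
      rw [pmass_erase hp hi, hxeq i]
      have h1 : p i ≠ 0 := ne_of_gt (hp i).1
      have h2 : d i ≠ 0 := ne_of_gt (hd i)
      field_simp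
    have h1 : κ * ∑ i ∈ T, pmass n p (T.erase i) * (a i / d i)
        = pmass n p T * (∑ i ∈ T, x i) - κ * (pmass n p T * ∑ i ∈ T, (a i / d i)) := by
      rw [Finset.mul_sum, Finset.sum_congr rfl per_i, Finset.sum_sub_distrib,
        ← Finset.mul_sum, ← Finset.mul_sum, ← Finset.mul_sum]
    have hsumad : (∑ i ∈ T, a i / d i) + ∑ i ∈ Tᶜ, a i / d i = ∑ i, a i / d i :=
      Finset.sum_add_sum_compl T _
    linear_combination h1 - κ * pmass n p T * hsumad + pmass n p T * hBeq
  have step1 : ∀ S : Finset (Fin n),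
      pmass n p S * ((∑ i ∈ S, (a i + d i)) + (∑ i ∈ Sᶜ, (a i / d i) * (w (insert i S) - w S)) - w S)
      = pmass n p S * (∑ i ∈ S, (a i + d i))
        + ((∑ i ∈ Sᶜ, pmass n p S * ((a i / d i) * w (insert i S)))
          - (pmass n p S * (∑ i ∈ Sᶜ, (a i / d i)) + pmass n p S) * w S) := by
    intro S
    have hinner : ∑ i ∈ Sᶜ, (a i / d i) * (w (insert i S) - w S)
        = (∑ i ∈ Sᶜ, (a i / d i) * w (insert i S)) - (∑ i ∈ Sᶜ, (a i / d i)) * w S := by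
      rw [Finset.sum_mul, ← Finset.sum_sub_distrib]
      exact Finset.sum_congr rfl fun i _ => by ring
    rw [hinner, ← Finset.mul_sum]
    ring
  have reidx := reindex_lemma (fun T S i => pmass n p S * ((a i / d i) * w T))
  have pull : ∀ T : Finset (Fin n),
      ∑ i ∈ T, pmass n p (T.erase i) * ((a i / d i) * w T)
        = (∑ i ∈ T, pmass n p (T.erase i) * (a i / d i)) * w T := by
    intro T
    rw [Finset.sum_mul]
    exact Finset.sum_congr rfl fun i _ => by ring
  have hfinal : κ * ((∑ T : Finset (Fin n), (∑ i ∈ T, pmass n p (T.erase i) * (a i / d i)) * w T)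
        - ∑ T : Finset (Fin n), (pmass n p T * (∑ i ∈ Tᶜ, a i / d i) + pmass n p T) * w T)
      = LP2Obj n p x B w := by
    rw [← Finset.sum_sub_distrib, Finset.mul_sum]
    unfold LP2Obj
    refine Finset.sum_congr rfl fun T _ => ?_
    linear_combination w T * coeff T
  unfold Fo
  calc κ * (∑ S : Finset (Fin n), pmass n p S *
        ((∑ i ∈ S, (a i + d i)) + (∑ i ∈ Sᶜ, (a i / d i) * (w (insert i S) - w S)) - w S))
      = κ * ∑ S : Finset (Fin n), (pmass n p S * (∑ i ∈ S, (a i + d i))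
          + ((∑ i ∈ Sᶜ, pmass n p S * ((a i / d i) * w (insert i S)))
            - (pmass n p S * (∑ i ∈ Sᶜ, (a i / d i)) + pmass n p S) * w S)) := by
        rw [Finset.sum_congr rfl fun S _ => step1 S]
    _ = κ * (∑ S : Finset (Fin n), pmass n p S * (∑ i ∈ S, (a i + d i)))
          + κ * ((∑ S : Finset (Fin n), ∑ i ∈ Sᶜ, pmass n p S * ((a i / d i) * w (insert i S)))
            - ∑ S : Finset (Fin n), (pmass n p S * (∑ i ∈ Sᶜ, (a i / d i)) + pmass n p S) * w S) := by
        rw [Finset.sum_add_distrib, Finset.sum_sub_distrib]; ring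
    _ = κ * (∑ S : Finset (Fin n), pmass n p S * (∑ i ∈ S, (a i + d i)))
          + κ * ((∑ T : Finset (Fin n), (∑ i ∈ T, pmass n p (T.erase i) * (a i / d i)) * w T)
            - ∑ T : Finset (Fin n), (pmass n p T * (∑ i ∈ Tᶜ, a i / d i) + pmass n p T) * w T) := by
        rw [reidx, Finset.sum_congr rfl fun T _ => pull T]
    _ = _ := by rw [hfinal]

lemma sum_single_diff {n : ℕ} {a d : Fin n → ℝ} {S : Finset (Fin n)} {i : Fin n}
    (hiS : i ∉ S) (c : Fin n → ℝ) :
    ∑ j, (vval n a d (insert i S) j - vval n a d S j) * c j = d i * c i := by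
  rw [Finset.sum_eq_single_of_mem i (Finset.mem_univ i)]
  · simp only [vval, Finset.mem_insert_self, if_pos, if_neg hiS]
    ring
  · intro j _ hji
    have hmem : j ∈ insert i S ↔ j ∈ S := by
      simp only [Finset.mem_insert]
      constructor
      · rintro (rfl | h); exact absurd rfl hji; exact h
      · exact Or.inr
    by_cases hjS : j ∈ S
    · simp [vval, hjS, hmem.mpr hjS]
    · simp [vval, hjS, hji, Finset.mem_insert]

/-- The `i`-th term of the pointwise bound. -/
noncomputable def bterm (n : ℕ) (a d : Fin n → ℝ) (w : Finset (Fin n) → ℝ)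
    (S : Finset (Fin n)) (i : Fin n) : ℝ :=
  if i ∈ S then a i + d i else (a i / d i) * (w (insert i S) - w S)

lemma bterm_sum {n : ℕ} (a d : Fin n → ℝ) (w : Finset (Fin n) → ℝ) (S : Finset (Fin n)) :
    ∑ i, bterm n a d w S i
      = (∑ i ∈ S, (a i + d i)) + ∑ i ∈ Sᶜ, (a i / d i) * (w (insert i S) - w S) := by
  rw [← Finset.sum_add_sum_compl S]
  congr 1
  · exact Finset.sum_congr rfl fun i hi => by simp [bterm, hi]
  · exact Finset.sum_congr rfl fun i hi => by
      simp [bterm, Finset.mem_compl.mp hi]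

lemma term_bound {n : ℕ} {a d : Fin n → ℝ} {u' : Finset (Fin n) → ℝ}
    {q' : Finset (Fin n) → Fin n → ℝ}
    (ha : ∀ i, 0 < a i) (hd : ∀ i, 0 < d i)
    (hfeas' : LP1Feasible n a d u' q') (S : Finset (Fin n)) (i : Fin n) :
    vval n a d S i * q' S i ≤ bterm n a d u' S i := by
  by_cases hiS : i ∈ S
  · simp only [vval, bterm, if_pos hiS]
    have h1 := (hfeas'.2.2 S i).2
    nlinarith [ha i, hd i]
  · simp only [vval, bterm, if_neg hiS]
    have hbic := hfeas'.1 (insert i S) S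
    rw [sum_single_diff hiS] at hbic
    have hdq : d i * q' S i ≤ u' (insert i S) - u' S := by linarith
    have hrw : a i * q' S i = (a i / d i) * (d i * q' S i) := by
      have hd0 : d i ≠ 0 := ne_of_gt (hd i)
      field_simp
    rw [hrw]
    exact mul_le_mul_of_nonneg_left hdq (le_of_lt (div_pos (ha i) (hd i)))

lemma lp1_to_lp2 {n : ℕ} {a d : Fin n → ℝ} {u' : Finset (Fin n) → ℝ}
    {q' : Finset (Fin n) → Fin n → ℝ}
    (hd : ∀ i, 0 < d i)
    (hfeas' : LP1Feasible n a d u' q') : LP2Feasible n d u' := by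
  refine ⟨fun S i hiS => ?_, hfeas'.2.1⟩
  have hbic := hfeas'.1 S (insert i S)
  have hq := hfeas'.2.2 (insert i S) i
  have hsum : ∑ j, (vval n a d S j - vval n a d (insert i S) j) * q' (insert i S) j
      = - (d i * q' (insert i S) i) := by
    have h0 := sum_single_diff (a := a) (d := d) hiS (q' (insert i S))
    calc ∑ j, (vval n a d S j - vval n a d (insert i S) j) * q' (insert i S) j
        = - ∑ j, (vval n a d (insert i S) j - vval n a d S j) * q' (insert i S) j := by
          rw [← Finset.sum_neg_distrib]
          exact Finset.sum_congr rfl fun j _ => by ring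
      _ = - (d i * q' (insert i S) i) := by rw [h0]
  rw [hsum] at hbic
  nlinarith [hd i, hq.1, hq.2]

lemma LP1Obj_le_Fo {n : ℕ} {a d p : Fin n → ℝ} {u' : Finset (Fin n) → ℝ}
    {q' : Finset (Fin n) → Fin n → ℝ}
    (ha : ∀ i, 0 < a i) (hd : ∀ i, 0 < d i) (hp : ∀ i, p i ∈ Set.Ioo (0:ℝ) 1)
    (hfeas' : LP1Feasible n a d u' q') :
    LP1Obj n a d p u' q' ≤ Fo n a d p u' := by
  unfold LP1Obj Fo
  refine Finset.sum_le_sum fun S _ => ?_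
  refine mul_le_mul_of_nonneg_left ?_ (le_of_lt (pmass_pos hp S))
  have h1 : ∑ i, vval n a d S i * q' S i ≤ ∑ i, bterm n a d u' S i :=
    Finset.sum_le_sum fun i _ => term_bound ha hd hfeas' S i
  rw [bterm_sum] at h1
  linarith

lemma LP1Obj_qOf_eq {n : ℕ} {a d p : Fin n → ℝ} (u : Finset (Fin n) → ℝ) :
    LP1Obj n a d p u (qOf n d u) = Fo n a d p u := by
  unfold LP1Obj Fo
  refine Finset.sum_congr rfl fun S _ => ?_
  have h1 : ∑ i, vval n a d S i * qOf n d u S i = ∑ i, bterm n a d u S i := by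
    refine Finset.sum_congr rfl fun i _ => ?_
    by_cases hiS : i ∈ S
    · simp [vval, qOf, bterm, hiS]
    · simp only [vval, qOf, bterm, if_neg hiS]
      ring
  rw [h1, bterm_sum]

theorem stmt_4 (n : ℕ) (hn : 1 ≤ n) (a d p x : Fin n → ℝ) (κ B : ℝ)
    (ha : ∀ i, 0 < a i) (hd : ∀ i, 0 < d i) (hp : ∀ i, p i ∈ Set.Ioo (0:ℝ) 1)
    (hx : ∀ i, 0 < x i) (hκ : 0 < κ)
    (hBeq : B = κ * (1 + ∑ i, a i / d i))
    (hxeq : ∀ i, x i = κ * a i / (p i * d i))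
    (u : Finset (Fin n) → ℝ)
    (hfeas : LP2Feasible n d u)
    (hmax : ∀ u', LP2Feasible n d u' → LP2Obj n p x B u' ≤ LP2Obj n p x B u)
    (hmono : ∀ S T : Finset (Fin n), S ⊆ T → u S ≤ u T)
    (hsuper : ∀ S T : Finset (Fin n), u S + u T ≤ u (S ∪ T) + u (S ∩ T)) :
    LP1Feasible n a d u (qOf n d u) ∧
    (∀ u' q', LP1Feasible n a d u' q' →
        LP1Obj n a d p u' q' ≤ LP1Obj n a d p u (qOf n d u)) ∧
    ((∀ u', LP2Feasible n d u' → LP2Obj n p x B u' = LP2Obj n p x B u → u' = u) →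
      ∀ u' q', LP1Feasible n a d u' q' →
        LP1Obj n a d p u' q' = LP1Obj n a d p u (qOf n d u) →
        u' = u ∧ q' = qOf n d u) := by
  have hdq : ∀ S (i : Fin n), 0 ≤ qOf n d u S i ∧ qOf n d u S i ≤ 1 := by
    intro S i
    by_cases hiS : i ∈ S
    · simp [qOf, hiS]
    · simp only [qOf, if_neg hiS]
      constructor
      · exact div_nonneg (sub_nonneg.mpr (hmono S (insert i S) (Finset.subset_insert i S)))
          (le_of_lt (hd i))
      · rw [div_le_one (hd i)]
        linarith [hfeas.1 S i hiS]
  have hbic : ∀ S T : Finset (Fin n),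
      u S ≥ u T + ∑ i, (vval n a d S i - vval n a d T i) * qOf n d u T i := by
    intro S T
    rw [sum_vval_qOf hd S T]
    have h1 := sup_marg hsuper S T
    have h2 := lip_sum hfeas.1 T S
    linarith
  have hfeas1 : LP1Feasible n a d u (qOf n d u) := ⟨hbic, hfeas.2, hdq⟩
  have hC := fun w => key_identity (x := x) (κ := κ) (B := B) hd hp hBeq hxeq w
  have hFu : Fo n a d p u = LP1Obj n a d p u (qOf n d u) := (LP1Obj_qOf_eq u).symm
  have hFoLe : ∀ u' q', LP1Feasible n a d u' q' →
      LP1Obj n a d p u' q' ≤ LP1Obj n a d p u (qOf n d u) := by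
    intro u' q' hf'
    have h1 := LP1Obj_le_Fo ha hd hp hf'
    have h2 : LP2Obj n p x B u' ≤ LP2Obj n p x B u := hmax u' (lp1_to_lp2 hd hf')
    have h3 := hC u'
    have h4 := hC u
    have h5 : Fo n a d p u' ≤ Fo n a d p u := by nlinarith
    linarith
  refine ⟨hfeas1, hFoLe, ?_⟩
  intro huniq u' q' hf' heq
  have h1 := LP1Obj_le_Fo ha hd hp hf'
  have h2 : LP2Obj n p x B u' ≤ LP2Obj n p x B u := hmax u' (lp1_to_lp2 hd hf')
  have h3 := hC u'
  have h4 := hC u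
  have h5 : Fo n a d p u' ≤ Fo n a d p u := by nlinarith
  have hFeq : Fo n a d p u' = Fo n a d p u := by linarith
  have hL2eq : LP2Obj n p x B u' = LP2Obj n p x B u := by
    have h6 : κ * Fo n a d p u' = κ * Fo n a d p u := by rw [hFeq]
    linarith
  have huu : u' = u := huniq u' (lp1_to_lp2 hd hf') hL2eq
  subst huu
  refine ⟨rfl, ?_⟩
  -- now show q' = qOf n d u'
  have hdiff0 : ∑ S : Finset (Fin n),
      pmass n p S * ((∑ i, bterm n a d u' S i) - ∑ i, vval n a d S i * q' S i) = 0 := by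
    have hexp : ∀ S : Finset (Fin n),
        pmass n p S * ((∑ i, bterm n a d u' S i) - ∑ i, vval n a d S i * q' S i)
        = pmass n p S * ((∑ i ∈ S, (a i + d i))
            + (∑ i ∈ Sᶜ, (a i / d i) * (u' (insert i S) - u' S)) - u' S)
          - pmass n p S * ((∑ i, vval n a d S i * q' S i) - u' S) := by
      intro S; rw [bterm_sum]; ring
    rw [Finset.sum_congr rfl fun S _ => hexp S, Finset.sum_sub_distrib]
    have hz : Fo n a d p u' - LP1Obj n a d p u' q' = 0 := by
      rw [hFu, heq, sub_self]
    unfold Fo LP1Obj at hz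
    exact hz
  have hnn : ∀ S ∈ (Finset.univ : Finset (Finset (Fin n))),
      0 ≤ pmass n p S * ((∑ i, bterm n a d u' S i) - ∑ i, vval n a d S i * q' S i) := by
    intro S _
    refine mul_nonneg (le_of_lt (pmass_pos hp S)) (sub_nonneg.mpr ?_)
    exact Finset.sum_le_sum fun i _ => term_bound ha hd hf' S i
  have hS0 := (Finset.sum_eq_zero_iff_of_nonneg hnn).mp hdiff0
  funext S i
  have hS0' : (∑ i, bterm n a d u' S i) - ∑ i, vval n a d S i * q' S i = 0 := by
    have := hS0 S (Finset.mem_univ S)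
    rcases mul_eq_zero.mp this with h | h
    · exact absurd h (ne_of_gt (pmass_pos hp S))
    · exact h
  have hterm0 : ∀ j ∈ (Finset.univ : Finset (Fin n)),
      bterm n a d u' S j - vval n a d S j * q' S j = 0 := by
    refine (Finset.sum_eq_zero_iff_of_nonneg fun j _ =>
      sub_nonneg.mpr (term_bound ha hd hf' S j)).mp ?_
    rw [Finset.sum_sub_distrib]
    exact hS0'
  have h0 := hterm0 i (Finset.mem_univ i)
  by_cases hiS : i ∈ S
  · simp only [bterm, vval, qOf, if_pos hiS] at h0 ⊢
    have had : (a i + d i) ≠ 0 := by nlinarith [ha i, hd i]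
    exact mul_left_cancel₀ had (by linarith : (a i + d i) * q' S i = (a i + d i) * 1)
  · simp only [bterm, vval, qOf, if_neg hiS] at h0 ⊢
    have ha0 : a i ≠ 0 := ne_of_gt (ha i)
    have h1 : a i * q' S i = (a i / d i) * (u' (insert i S) - u' S) := by linarith
    exact mul_left_cancel₀ ha0 (by rw [h1]; ring)
end

section
/- Consider LP1 with n = 2, a = (1,1), d = (1,2), and p = (1/2, 1/2) (i.e., a single additive bidder with two independent items, one uniform on {1,2} and the other uniform on {1,3}). Then LP1 has a unique optimal solution (u, q); its objective value is 21/8; u is given by u({1,2}) = 1 and u(∅) = u({1}) = u({2}) = 0; and q satisfies q(∅) = (0,0), q({1}) = (1, 1/2), q({2}) = (1,1), q({1,2}) = (1,1). In particular q_2({1}) = 1/2, so the unique revenue-optimal mechanism is randomized. -/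
open Finset
open scoped BigOperators Classical

/-- Item 1 (index 0) has low value 1, high value 2; item 2 (index 1) has low value 1,
high value 3. -/
def aEx : Fin 2 → ℝ := fun _ => 1
def dEx : Fin 2 → ℝ := fun i => if i = 0 then 1 else 2
noncomputable def pEx : Fin 2 → ℝ := fun _ => 1 / 2

/-- The optimal utility: `u({1,2}) = 1` and `u = 0` elsewhere. -/
def uStar (S : Finset (Fin 2)) : ℝ := if S = Finset.univ then 1 else 0

/-- The optimal allocation rule: `q(∅) = (0,0)`, `q({1}) = (1, 1/2)`,
`q({2}) = (1,1)`, `q({1,2}) = (1,1)`. -/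
noncomputable def qStar (S : Finset (Fin 2)) (i : Fin 2) : ℝ :=
  if S = (∅ : Finset (Fin 2)) then 0
  else if S = ({0} : Finset (Fin 2)) then (if i = 0 then 1 else 1 / 2)
  else 1

lemma sum4 (f : Finset (Fin 2) → ℝ) :
    ∑ S : Finset (Fin 2), f S = f ∅ + f {0} + f {1} + f Finset.univ := by
  rw [show (Finset.univ : Finset (Finset (Fin 2))) = {∅, {0}, {1}, Finset.univ} from by decide]
  rw [Finset.sum_insert (by decide), Finset.sum_insert (by decide),
    Finset.sum_insert (by decide), Finset.sum_singleton]
  ring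

lemma henum2 : ∀ S : Finset (Fin 2), S = ∅ ∨ S = {0} ∨ S = {1} ∨ S = Finset.univ := by decide

lemma pmass_ex : ∀ S : Finset (Fin 2), pmass 2 pEx S = 1 / 4 := by
  intro S
  rcases henum2 S with rfl|rfl|rfl|rfl <;>
    norm_num [pmass, pEx, Fin.prod_univ_two, Finset.compl_empty, Finset.compl_univ,
      show ({0}:Finset (Fin 2))ᶜ = {1} from by decide,
      show ({1}:Finset (Fin 2))ᶜ = {0} from by decide]

lemma obj_eval (u : Finset (Fin 2) → ℝ) (q : Finset (Fin 2) → Fin 2 → ℝ) :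
    LP1Obj 2 aEx dEx pEx u q =
      1 / 4 * ((q ∅ 0 + q ∅ 1 - u ∅) + (2 * q {0} 0 + q {0} 1 - u {0}) +
        (q {1} 0 + 3 * q {1} 1 - u {1}) +
        (2 * q Finset.univ 0 + 3 * q Finset.univ 1 - u Finset.univ)) := by
  unfold LP1Obj
  rw [sum4]
  simp only [pmass_ex]
  norm_num [vval, aEx, dEx, Fin.sum_univ_two, Finset.mem_insert, Finset.mem_singleton]
  ring

theorem stmt_18 :
    LP1Feasible 2 aEx dEx uStar qStar ∧
    LP1Obj 2 aEx dEx pEx uStar qStar = 21 / 8 ∧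
    (∀ u q, LP1Feasible 2 aEx dEx u q →
      LP1Obj 2 aEx dEx pEx u q ≤ 21 / 8 ∧
        (LP1Obj 2 aEx dEx pEx u q = 21 / 8 → u = uStar ∧ q = qStar)) ∧
    qStar ({0} : Finset (Fin 2)) 1 = 1 / 2 := by
  have hne1 : ({0}:Finset (Fin 2)) ≠ Finset.univ := by decide
  have hne2 : ({1}:Finset (Fin 2)) ≠ Finset.univ := by decide
  have hne3 : (∅:Finset (Fin 2)) ≠ Finset.univ := by decide
  have hne4 : (Finset.univ:Finset (Fin 2)) ≠ ∅ := by decide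
  have hne5 : (Finset.univ:Finset (Fin 2)) ≠ {0} := by decide
  have hne6 : ({1}:Finset (Fin 2)) ≠ ∅ := by decide
  have hne7 : ({1}:Finset (Fin 2)) ≠ {0} := by decide
  have hne8 : ({0}:Finset (Fin 2)) ≠ ∅ := by decide
  refine ⟨⟨?_, ?_, ?_⟩, ?_, ?_, by norm_num [qStar, hne8]⟩
  · intro S T
    rcases henum2 S with rfl|rfl|rfl|rfl <;> rcases henum2 T with rfl|rfl|rfl|rfl <;>
      norm_num [vval, uStar, qStar, aEx, dEx, Fin.sum_univ_two, Finset.mem_insert,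
        Finset.mem_singleton, hne1, hne2, hne3, hne4, hne5, hne6, hne7, hne8]
  · intro S
    rcases henum2 S with rfl|rfl|rfl|rfl <;> norm_num [uStar, hne1, hne2, hne3]
  · intro S i
    rcases henum2 S with rfl|rfl|rfl|rfl <;>
      rcases (by decide : ∀ i : Fin 2, i = 0 ∨ i = 1) i with rfl|rfl <;>
      norm_num [qStar, hne4, hne5, hne6, hne7, hne8]
  · rw [obj_eval]
    norm_num [uStar, qStar, hne1, hne2, hne3, hne4, hne5, hne6, hne7, hne8]
  · rintro u q ⟨hB, hIR, hQ⟩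
    have h1 := hB {0} ∅
    have h2 := hB {1} ∅
    have h3 := hB Finset.univ {0}
    have h4 := hB Finset.univ {1}
    rw [Fin.sum_univ_two] at h1 h2 h3 h4
    norm_num [vval, aEx, dEx, Finset.mem_insert, Finset.mem_singleton] at h1 h2 h3 h4
    have i0 := hIR ∅
    have iA := hIR {0}
    have iB := hIR {1}
    have qA0 := hQ ∅ 0
    have qA1 := hQ ∅ 1
    have qB0 := hQ {0} 0
    have qB1 := hQ {0} 1
    have qC0 := hQ {1} 0
    have qC1 := hQ {1} 1
    have qD0 := hQ Finset.univ 0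
    have qD1 := hQ Finset.univ 1
    rw [obj_eval]
    constructor
    · linarith [qA0.1, qA0.2, qA1.1, qA1.2, qB0.1, qB0.2, qB1.1, qB1.2, qC0.1, qC0.2,
        qC1.1, qC1.2, qD0.1, qD0.2, qD1.1, qD1.2, h1, h2, h3, h4, i0, iA, iB]
    · intro heq
      have e1 : q ∅ 0 = 0 := by linarith [qA0.1, qA1.1, qB0.2, qC0.2, qC1.2, qD0.2, qD1.2, h1, h2, h3, h4, i0, iA, iB]
      have e2 : q ∅ 1 = 0 := by linarith [qA0.1, qA1.1, qB0.2, qC0.2, qC1.2, qD0.2, qD1.2, h1, h2, h3, h4, i0, iA, iB]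
      have e3 : q {0} 0 = 1 := by linarith [qA0.1, qA1.1, qB0.2, qC0.2, qC1.2, qD0.2, qD1.2, h1, h2, h3, h4, i0, iA, iB]
      have e5 : q {1} 0 = 1 := by linarith [qA0.1, qA1.1, qB0.2, qC0.2, qC1.2, qD0.2, qD1.2, h1, h2, h3, h4, i0, iA, iB]
      have e6 : q {1} 1 = 1 := by linarith [qA0.1, qA1.1, qB0.2, qC0.2, qB0.2, qD0.2, qD1.2, h1, h2, h3, h4, i0, iA, iB, qC1.2]
      have e7 : q Finset.univ 0 = 1 := by linarith [qA0.1, qA1.1, qB0.2, qC0.2, qC1.2, qD0.2, qD1.2, h1, h2, h3, h4, i0, iA, iB]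
      have e8 : q Finset.univ 1 = 1 := by linarith [qA0.1, qA1.1, qB0.2, qC0.2, qC1.2, qD0.2, qD1.2, h1, h2, h3, h4, i0, iA, iB]
      have f0 : u ∅ = 0 := by linarith [qA0.1, qA1.1, qB0.2, qC0.2, qC1.2, qD0.2, qD1.2, h1, h2, h3, h4, i0, iA, iB]
      have fA : u {0} = 0 := by linarith [qA0.1, qA1.1, qB0.2, qC0.2, qC1.2, qD0.2, qD1.2, h1, h2, h3, h4, i0, iA, iB]
      have fB : u {1} = 0 := by linarith [qA0.1, qA1.1, qB0.2, qC0.2, qC1.2, qD0.2, qD1.2, h1, h2, h3, h4, i0, iA, iB]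
      have fU : u Finset.univ = 1 := by linarith [qA0.1, qA1.1, qB0.2, qC0.2, qC1.2, qD0.2, qD1.2, h1, h2, h3, h4, i0, iA, iB]
      have e4 : q {0} 1 = 1 / 2 := by linarith [qA0.1, qA1.1, qB0.2, qC0.2, qC1.2, qD0.2, qD1.2, h1, h2, h3, h4, i0, iA, iB]
      constructor
      · funext S
        rcases henum2 S with rfl|rfl|rfl|rfl <;>
          simp [uStar, hne1, hne2, hne3, f0, fA, fB, fU]
      · funext S i
        rcases henum2 S with rfl|rfl|rfl|rfl <;>
          rcases (by decide : ∀ i : Fin 2, i = 0 ∨ i = 1) i with rfl|rfl <;>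
          simp [qStar, hne4, hne5, hne6, hne7, hne8, e1, e2, e3, e4, e5, e6, e7, e8]
end
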